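/- Let p = (α_1,…,α_n) ∈ ℂⁿ, let M_p = (x_1−α_1)A + ⋯ + (x_n−α_n)A be the corresponding maximal ideal of A, and for 1 ≤ i ≤ n−2 set g_i = t_i(p)·s_i − s_i(p)·t_i ∈ A. Then M_p is a Poisson ideal of A if and only if at least one of the following holds: (1) s_i(p) = 0 and t_i(p) = 0 for some i; (2) g_1, …, g_{n−2} are algebraically dependent over ℂ; (3) p is a singular point of the affine variety determined by g_1, …, g_{n−2}, i.e. every (n−2)×(n−2) minor of the (n−2)×n Jacobian matrix whose (i,j) entry is (∂g_i/∂x_j) vanishes at p. -/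

import Mathlib

/- STATEMENT 13: For p ∈ ℂⁿ and the maximal ideal M_p = (x_1−α_1,…,x_n−α_n), with
g_i = t_i(p)·s_i − s_i(p)·t_i, the ideal M_p is Poisson iff (1) some s_i, t_i have a
common zero at p, or (2) g_1,…,g_{n−2} are algebraically dependent over ℂ, or
(3) p is a singular point of the variety of g_1,…,g_{n−2} (all maximal minors of the
Jacobian matrix of the g_i vanish at p). -/

noncomputable section
open MvPolynomial

/-- The polynomial algebra `A = ℂ[x_1,…,x_{m+2}]`. -/
abbrev PA (m : ℕ) : Type := MvPolynomial (Fin (m + 2)) ℂ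

/-- The rational function field `B = ℂ(x_1,…,x_{m+2})`. -/
abbrev FB (m : ℕ) : Type := FractionRing (PA m)

/-- The rows of the matrix computing the Poisson bracket on `A`: ∇f, ∇g and, for
each `i`, `t_i²∇(s_i/t_i) = t_i∇s_i − s_i∇t_i`. -/
def pbrRows {m : ℕ} (s t : Fin m → PA m) (f g : PA m) :
    Fin (m + 2) → Fin (m + 2) → PA m :=
  Fin.cons (fun j => pderiv j f)
    (Fin.cons (fun j => pderiv j g)
      (fun k => fun j => t k * pderiv j (s k) - s k * pderiv j (t k)))

/-- The Poisson bracket `{f,g} = (t_1⋯t_m)²·Jac(f,g,s_1/t_1,…,s_m/t_m)` restricted to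
the polynomial algebra `A`. -/
def pbr {m : ℕ} (s t : Fin m → PA m) (f g : PA m) : PA m :=
  Matrix.det (Matrix.of (pbrRows s t f g))

/-! ### Auxiliary lemmas -/

section Aux

open Submodule Matrix

lemma aux_mem_span_iff_eval_eq_zero {n : ℕ} (p : Fin n → ℂ) (u : MvPolynomial (Fin n) ℂ) :
    u ∈ Ideal.span (Set.range fun j => X j - C (p j)) ↔ eval p u = 0 := by
  constructor
  · intro h
    have hle : Ideal.span (Set.range fun j => X j - C (p j)) ≤
        RingHom.ker (eval p : MvPolynomial (Fin n) ℂ →+* ℂ) := by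
      rw [Ideal.span_le]
      rintro _ ⟨j, rfl⟩
      simp [RingHom.mem_ker]
    exact hle h
  · intro h
    have key : ∀ v : MvPolynomial (Fin n) ℂ,
        v - C (eval p v) ∈ Ideal.span (Set.range fun j => X j - C (p j)) := by
      intro v
      induction v using MvPolynomial.induction_on with
      | C a => simp
      | add f g hf hg =>
          have : f + g - C (eval p (f + g)) = (f - C (eval p f)) + (g - C (eval p g)) := by
            rw [map_add, map_add]; ring
          rw [this]; exact Ideal.add_mem _ hf hg
      | mul_X f j hf =>
          have : f * X j - C (eval p (f * X j)) =
              (f - C (eval p f)) * X j + C (eval p f) * (X j - C (p j)) := by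
            rw [_root_.map_mul, eval_X, _root_.map_mul]; ring
          rw [this]
          exact Ideal.add_mem _ (Ideal.mul_mem_right _ _ hf)
            (Ideal.mul_mem_left _ _ (Ideal.subset_span ⟨j, rfl⟩))
    have := key u
    rwa [h, map_zero, sub_zero] at this

lemma aux_coeff_pderiv {σ : Type*} [DecidableEq σ] (i : σ) (f : MvPolynomial σ ℂ)
    (md : σ →₀ ℕ) :
    coeff md (pderiv i f) = ((md i : ℂ) + 1) * coeff (md + Finsupp.single i 1) f := by
  induction f using MvPolynomial.induction_on' with
  | add f g hf hg => simp [hf, hg]; ring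
  | monomial s a =>
      rw [pderiv_monomial, coeff_monomial, coeff_monomial]
      by_cases h : s = md + Finsupp.single i 1
      · subst h
        have h1 : md + Finsupp.single i 1 - Finsupp.single i 1 = md := by
          simp
        rw [if_pos h1, if_pos rfl]
        simp [mul_comm]
      · rw [if_neg h]
        by_cases h2 : s - Finsupp.single i 1 = md
        · rw [if_pos h2]
          by_cases h3 : s i = 0
          · simp [h3]
          · exfalso
            apply h
            rw [← h2, tsub_add_cancel_of_le]
            rwa [Finsupp.single_le_iff, Nat.one_le_iff_ne_zero]
        · rw [if_neg h2, mul_zero]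

lemma aux_sum_add_single {σ : Type*} (md : σ →₀ ℕ) (i : σ) :
    ((md + Finsupp.single i 1).sum fun _ e => e) = (md.sum fun _ e => e) + 1 := by
  rw [Finsupp.sum_add_index' (fun _ => rfl) (fun _ _ _ => rfl), Finsupp.sum_single_index rfl]

lemma aux_totalDegree_pderiv_lt {σ : Type*} [DecidableEq σ] (i : σ) (f : MvPolynomial σ ℂ)
    (h : pderiv i f ≠ 0) :
    (pderiv i f).totalDegree < f.totalDegree := by
  have hmem : ∀ md ∈ (pderiv i f).support, md + Finsupp.single i 1 ∈ f.support := by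
    intro md hmd
    rw [MvPolynomial.mem_support_iff] at hmd ⊢
    intro hc
    rw [aux_coeff_pderiv, hc, mul_zero] at hmd
    exact hmd rfl
  obtain ⟨md0, hmd0⟩ := MvPolynomial.support_nonempty.mpr h
  have hpos : 0 < f.totalDegree := by
    have := le_totalDegree (hmem md0 hmd0)
    have h1 : 1 ≤ ((md0 + Finsupp.single i 1).sum fun _ e => e) := by
      rw [aux_sum_add_single]; omega
    omega
  rw [totalDegree, Finset.sup_lt_iff (by simpa using hpos)]
  intro md hmd
  have := le_totalDegree (hmem md hmd)
  rw [aux_sum_add_single] at this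
  omega

lemma aux_eq_C_of_pderiv_eq_zero {σ : Type*} [DecidableEq σ] (f : MvPolynomial σ ℂ)
    (h : ∀ i, pderiv i f = 0) : f = C (coeff 0 f) := by
  ext md
  by_cases h0 : md = 0
  · subst h0; simp
  · rw [coeff_C, if_neg (Ne.symm h0)]
    obtain ⟨i, hi⟩ : ∃ i, md i ≠ 0 := by
      by_contra hc
      push_neg at hc
      exact h0 (Finsupp.ext fun i => hc i)
    have hle : Finsupp.single i 1 ≤ md := by
      rw [Finsupp.single_le_iff]; omega
    set md' : σ →₀ ℕ := md - Finsupp.single i 1 with hmd'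
    have hkey := aux_coeff_pderiv i f md'
    rw [h i, hmd', tsub_add_cancel_of_le hle] at hkey
    have hne : ((md' i : ℂ) + 1) ≠ 0 := by
      have := Nat.cast_add_one_ne_zero (R := ℂ) (md' i)
      simpa using this
    rcases mul_eq_zero.mp hkey.symm with h' | h'
    · exact absurd h' hne
    · exact h'

lemma aux_chain_rule {m n : ℕ} (g : Fin m → MvPolynomial (Fin n) ℂ)
    (F : MvPolynomial (Fin m) ℂ) (j : Fin n) :
    pderiv j (aeval g F) = ∑ i, aeval g (pderiv i F) * pderiv j (g i) := by
  induction F using MvPolynomial.induction_on with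
  | C a => simp [algebraMap_eq]
  | add f f' hf hf' =>
      rw [map_add, map_add, hf, hf', ← Finset.sum_add_distrib]
      exact Finset.sum_congr rfl fun i _ => by simp [add_mul]
  | mul_X f i0 hf =>
      rw [_root_.map_mul, aeval_X, pderiv_mul, hf]
      have hexp : ∀ i : Fin m, aeval g (pderiv i (f * X i0)) * pderiv j (g i) =
          aeval g (pderiv i f) * pderiv j (g i) * g i0 +
            (if i = i0 then aeval g f * pderiv j (g i0) else 0) := by
        intro i
        rw [pderiv_mul, _root_.map_add, _root_.map_mul, _root_.map_mul, aeval_X, pderiv_X]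
        by_cases h : i = i0
        · subst h; simp [Pi.single_eq_same]; ring
        · simp only [Pi.single_eq_of_ne' h, map_zero, mul_zero, add_zero, if_neg h]
          ring
      rw [Finset.sum_congr rfl fun i _ => hexp i, Finset.sum_add_distrib,
        Finset.sum_ite_eq' Finset.univ i0 (fun _ => aeval g f * pderiv j (g i0)),
        if_pos (Finset.mem_univ i0), Finset.sum_mul]

lemma aux_exists_relation_of_dep {m n : ℕ} (g : Fin m → MvPolynomial (Fin n) ℂ)
    (h : ¬ AlgebraicIndependent ℂ g) :
    ∃ a : Fin m → MvPolynomial (Fin n) ℂ, a ≠ 0 ∧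
      ∀ j, ∑ i, a i * pderiv j (g i) = 0 := by
  classical
  rw [algebraicIndependent_iff] at h
  push_neg at h
  set S : Set (MvPolynomial (Fin m) ℂ) := {F | aeval g F = 0 ∧ F ≠ 0} with hS
  have hSne : S.Nonempty := by
    obtain ⟨F, h1, h2⟩ := h
    exact ⟨F, h1, h2⟩
  set F₀ := Function.argminOn totalDegree S hSne with hF₀
  have hF₀S : F₀ ∈ S := Function.argminOn_mem _ _ _
  refine ⟨fun i => aeval g (pderiv i F₀), ?_, ?_⟩
  · intro hc
    have hz : ∀ i, aeval g (pderiv i F₀) = 0 := fun i => congrFun hc i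
    have hpz : ∀ i, pderiv i F₀ = 0 := by
      intro i
      by_contra hne
      have hmem : pderiv i F₀ ∈ S := ⟨hz i, hne⟩
      exact Function.not_lt_argminOn totalDegree S hmem
        (aux_totalDegree_pderiv_lt i F₀ hne)
    have hconst := aux_eq_C_of_pderiv_eq_zero F₀ hpz
    have h1 := hF₀S.1
    rw [hconst] at h1
    simp only [aeval_C] at h1
    have : coeff 0 F₀ = 0 := by
      have : (algebraMap ℂ (MvPolynomial (Fin n) ℂ)) (coeff 0 F₀) = 0 := h1
      simpa [algebraMap_eq] using this
    exact hF₀S.2 (by rw [hconst, this, map_zero])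
  · intro j
    have := aux_chain_rule g F₀ j
    rw [hF₀S.1, map_zero] at this
    exact this.symm

lemma aux_det_zero_of_relation {R : Type*} [CommRing R] [IsDomain R] {m n : ℕ}
    (W : Fin m → Fin n → R) (a : Fin m → R) (ha : a ≠ 0)
    (hrel : ∀ j, ∑ i, a i * W i j = 0) (c : Fin m → Fin n) :
    Matrix.det (Matrix.of fun i k => W i (c k)) = 0 := by
  classical
  apply Matrix.exists_vecMul_eq_zero_iff.mp
  refine ⟨a, ha, funext fun k => ?_⟩
  simpa [Matrix.vecMul, dotProduct] using hrel (c k)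

lemma aux_dep_imp_minors_zero {m n : ℕ} (W : Fin m → Fin n → ℂ)
    (h : ¬ LinearIndependent ℂ W) (c : Fin m → Fin n) :
    Matrix.det (Matrix.of fun i k => W i (c k)) = 0 := by
  obtain ⟨a, hsum, i, hi⟩ := Fintype.not_linearIndependent_iff.mp h
  refine aux_det_zero_of_relation W a (fun hc => hi (by rw [hc]; rfl)) (fun j => ?_) c
  have := congrFun hsum j
  simpa [Finset.sum_apply] using this

lemma aux_indep_imp_exists_minor {m n : ℕ} (W : Fin m → Fin n → ℂ)
    (h : LinearIndependent ℂ W) :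
    ∃ c : Fin m → Fin n, Function.Injective c ∧
      Matrix.det (Matrix.of fun i k => W i (c k)) ≠ 0 := by
  classical
  set M : Matrix (Fin m) (Fin n) ℂ := Matrix.of W with hM
  have hrank : M.rank = m := by
    have := LinearIndependent.rank_matrix (M := M) h
    simpa using this
  have hspan : span ℂ (Set.range Mᵀ) = ⊤ := by
    apply Submodule.eq_top_of_finrank_eq
    rw [show span ℂ (Set.range Mᵀ) = span ℂ (Set.range M.col) from rfl,
      ← Matrix.rank_eq_finrank_span_cols, hrank, Module.finrank_pi]
    simp
  obtain ⟨sset, hsub, hspan2, hli⟩ := exists_linearIndependent ℂ (Set.range Mᵀ)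
  rw [hspan] at hspan2
  have hfin : sset.Finite := hli.setFinite
  have hfx : Fintype sset := hfin.fintype
  let b : Module.Basis sset ℂ (Fin m → ℂ) :=
    Module.Basis.mk hli (by rw [Subtype.range_coe]; exact hspan2.ge)
  have hcard : Fintype.card sset = m := by
    have := Module.finrank_eq_card_basis b
    simpa [Module.finrank_pi] using this.symm
  let e : Fin m ≃ sset := (Fintype.equivFinOfCardEq hcard).symm
  have hmem : ∀ k : Fin m, ((e k : Fin m → ℂ)) ∈ Set.range Mᵀ := fun k => hsub (e k).2
  choose c hc using fun k => hmem k
  refine ⟨c, ?_, ?_⟩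
  · intro k k' hkk
    have : ((e k : Fin m → ℂ)) = ((e k' : Fin m → ℂ)) := by
      rw [← hc k, ← hc k', hkk]
    exact e.injective (Subtype.ext this)
  · have hcols : LinearIndependent ℂ (fun k : Fin m => ((e k : Fin m → ℂ))) :=
      hli.comp e e.injective
    intro hdet
    obtain ⟨x, hx, hmv⟩ := Matrix.exists_mulVec_eq_zero_iff.mpr hdet
    apply hx
    have hsum : ∑ k, x k • ((e k : Fin m → ℂ)) = 0 := by
      funext i
      have h2 := congrFun hmv i
      simp only [Matrix.mulVec, dotProduct, Matrix.of_apply, Pi.zero_apply] at h2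
      have h3 : (∑ k, x k • ((e k : Fin m → ℂ))) i = ∑ k, x k * (e k : Fin m → ℂ) i := by
        simp [Finset.sum_apply]
      rw [h3]
      have h4 : ∀ k : Fin m, x k * (e k : Fin m → ℂ) i = W i (c k) * x k := by
        intro k
        rw [← hc k]
        simp [Matrix.transpose_apply, mul_comm, hM]
      rw [Finset.sum_congr rfl fun k _ => h4 k, h2]
      simp
    exact funext (Fintype.linearIndependent_iff.mp hcols x (by simpa using hsum))

lemma aux_det_cons_eq_zero_of_dep {m : ℕ} (W : Fin m → Fin (m + 2) → ℂ)
    (h : ¬ LinearIndependent ℂ W) (v w : Fin (m + 2) → ℂ) :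
    Matrix.det (Matrix.of (Fin.cons v (Fin.cons w W))) = 0 := by
  classical
  obtain ⟨a, hsum, i, hi⟩ := Fintype.not_linearIndependent_iff.mp h
  apply Matrix.exists_vecMul_eq_zero_iff.mp
  refine ⟨Fin.cons 0 (Fin.cons 0 a), ?_, funext fun j => ?_⟩
  · intro hc
    apply hi
    have := congrFun hc i.succ.succ
    simpa using this
  · have hW : ∑ i, a i * W i j = 0 := by
      have := congrFun hsum j
      simpa [Finset.sum_apply] using this
    simp only [Matrix.vecMul, dotProduct, Matrix.of_apply, Pi.zero_apply]
    rw [Fin.sum_univ_succ, Fin.sum_univ_succ]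
    simpa using hW

lemma aux_exists_det_cons_ne_zero_of_indep {m : ℕ} (W : Fin m → Fin (m + 2) → ℂ)
    (h : LinearIndependent ℂ W) :
    ∃ v w : Fin (m + 2) → ℂ, Matrix.det (Matrix.of (Fin.cons v (Fin.cons w W))) ≠ 0 := by
  classical
  have hdim : ∀ (k : ℕ) (V : Fin k → Fin (m + 2) → ℂ), k < m + 2 →
      LinearIndependent ℂ V → ∃ x, x ∉ span ℂ (Set.range V) := by
    intro k V hk hV
    by_contra hc
    push_neg at hc
    have htop : span ℂ (Set.range V) = ⊤ := eq_top_iff.mpr fun x _ => hc x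
    have h1 : Module.finrank ℂ (span ℂ (Set.range V)) = k := by
      rw [finrank_span_eq_card hV]; simp
    rw [htop] at h1
    simp [Module.finrank_pi] at h1
    omega
  obtain ⟨w, hw⟩ := hdim m W (by omega) h
  have hW1 : LinearIndependent ℂ (Fin.cons w W) :=
    linearIndependent_fin_cons.mpr ⟨h, hw⟩
  obtain ⟨v, hv⟩ := hdim (m + 1) (Fin.cons w W) (by omega) hW1
  have hW2 : LinearIndependent ℂ (Fin.cons v (Fin.cons w W) : Fin (m + 2) → _) :=
    linearIndependent_fin_cons.mpr ⟨hW1, hv⟩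
  refine ⟨v, w, fun hdet => ?_⟩
  obtain ⟨x, hx, hmv⟩ := Matrix.exists_vecMul_eq_zero_iff.mpr hdet
  apply hx
  have hsum : ∑ i, x i • (Fin.cons v (Fin.cons w W) : Fin (m+2) → Fin (m+2) → ℂ) i = 0 := by
    funext j
    have h2 := congrFun hmv j
    simp only [Matrix.vecMul, dotProduct, Matrix.of_apply, Pi.zero_apply] at h2
    simpa [Finset.sum_apply, mul_comm] using h2
  exact funext (Fintype.linearIndependent_iff.mp hW2 x (by simpa using hsum))

end Aux

theorem statement_13 {m : ℕ} (hm : 1 ≤ m)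
    (s t : Fin m → PA m)
    (ht : ∀ i, t i ≠ 0)
    (hcop : ∀ i, ∀ d : PA m, d ∣ s i → d ∣ t i → IsUnit d)
    (hind : AlgebraicIndependent ℂ
      (fun i => algebraMap (PA m) (FB m) (s i) / algebraMap (PA m) (FB m) (t i)))
    (p : Fin (m + 2) → ℂ)
    (Mp : Ideal (PA m)) (hMp : Mp = Ideal.span (Set.range fun j => X j - C (p j)))
    (g : Fin m → PA m)
    (hg : ∀ i, g i = C (eval p (t i)) * s i - C (eval p (s i)) * t i) :
    (∀ u ∈ Mp, ∀ r : PA m, pbr s t u r ∈ Mp) ↔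
      ((∃ i, eval p (s i) = 0 ∧ eval p (t i) = 0) ∨
       (¬ AlgebraicIndependent ℂ g) ∨
       (∀ c : Fin m → Fin (m + 2), Function.Injective c →
          Matrix.det (Matrix.of fun i k => eval p (pderiv (c k) (g i))) = 0)) := by
  classical
  set W : Fin m → Fin (m + 2) → ℂ := fun i j => eval p (pderiv j (g i)) with hW
  -- evaluation of the bracket
  have hevalrow : ∀ (i : Fin m) (j : Fin (m + 2)),
      eval p (t i * pderiv j (s i) - s i * pderiv j (t i)) = W i j := by
    intro i j
    show eval p (t i * pderiv j (s i) - s i * pderiv j (t i)) = eval p (pderiv j (g i))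
    rw [hg i]
    simp [pderiv_C_mul]
  have hevalpbr : ∀ u r : PA m, eval p (pbr s t u r) =
      Matrix.det (Matrix.of (Fin.cons (fun j => eval p (pderiv j u))
        (Fin.cons (fun j => eval p (pderiv j r)) W))) := by
    intro u r
    rw [pbr, RingHom.map_det]
    congr 1
    funext i j
    refine Fin.cases ?_ (fun i' => ?_) i
    · rfl
    · refine Fin.cases ?_ (fun i'' => ?_) i'
      · rfl
      · show eval p (pbrRows s t u r i''.succ.succ j) = W i'' j
        simp only [pbrRows, Fin.cons_succ]
        exact hevalrow i'' j
  -- membership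
  have hmem : ∀ u : PA m, u ∈ Mp ↔ eval p u = 0 := by
    intro u; rw [hMp]; exact aux_mem_span_iff_eval_eq_zero p u
  -- step 1 : LHS iff all bordered determinants vanish
  have step1 : (∀ u ∈ Mp, ∀ r : PA m, pbr s t u r ∈ Mp) ↔
      (∀ v w : Fin (m + 2) → ℂ,
        Matrix.det (Matrix.of (Fin.cons v (Fin.cons w W))) = 0) := by
    constructor
    · intro hP v w
      set u : PA m := ∑ j, C (v j) * (X j - C (p j)) with hu
      set r : PA m := ∑ j, C (w j) * X j with hr
      have hu_mem : u ∈ Mp := by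
        rw [hMp, hu]
        exact Ideal.sum_mem _ fun j _ =>
          Ideal.mul_mem_left _ _ (Ideal.subset_span ⟨j, rfl⟩)
      have hdu : ∀ j0, eval p (pderiv j0 u) = v j0 := by
        intro j0
        rw [hu, map_sum, map_sum]
        have : ∀ j : Fin (m + 2),
            eval p (pderiv j0 (C (v j) * (X j - C (p j)))) =
              if j = j0 then v j else 0 := by
          intro j
          rw [pderiv_C_mul, map_sub, pderiv_C, sub_zero, pderiv_X, map_mul, eval_C]
          by_cases h : j = j0
          · subst h; simp [Pi.single_eq_same]
          · simp [Pi.single_eq_of_ne' h, h]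
        rw [Finset.sum_congr rfl fun j _ => this j, Finset.sum_ite_eq' Finset.univ j0,
          if_pos (Finset.mem_univ j0)]
      have hdr : ∀ j0, eval p (pderiv j0 r) = w j0 := by
        intro j0
        rw [hr, map_sum, map_sum]
        have : ∀ j : Fin (m + 2),
            eval p (pderiv j0 (C (w j) * X j)) = if j = j0 then w j else 0 := by
          intro j
          rw [pderiv_C_mul, pderiv_X, map_mul, eval_C]
          by_cases h : j = j0
          · subst h; simp [Pi.single_eq_same]
          · simp [Pi.single_eq_of_ne' h, h]
        rw [Finset.sum_congr rfl fun j _ => this j, Finset.sum_ite_eq' Finset.univ j0,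
          if_pos (Finset.mem_univ j0)]
      have := (hmem _).mp (hP u hu_mem r)
      rw [hevalpbr u r] at this
      have heq : (Fin.cons (fun j => eval p (pderiv j u))
          (Fin.cons (fun j => eval p (pderiv j r)) W) :
            Fin (m + 2) → Fin (m + 2) → ℂ) = Fin.cons v (Fin.cons w W) := by
        funext i j0
        refine Fin.cases ?_ (fun i' => ?_) i
        · simpa using hdu j0
        · refine Fin.cases ?_ (fun i'' => ?_) i'
          · simpa using hdr j0
          · rfl
      rwa [heq] at this
    · intro hall u hu r
      rw [hmem, hevalpbr u r]
      exact hall _ _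
  -- step 2 : all bordered determinants vanish iff W is linearly dependent
  have step2 : (∀ v w : Fin (m + 2) → ℂ,
      Matrix.det (Matrix.of (Fin.cons v (Fin.cons w W))) = 0) ↔
      ¬ LinearIndependent ℂ W := by
    constructor
    · intro hall hind'
      obtain ⟨v, w, hvw⟩ := aux_exists_det_cons_ne_zero_of_indep W hind'
      exact hvw (hall v w)
    · intro hdep v w
      exact aux_det_cons_eq_zero_of_dep W hdep v w
  -- step 3 : RHS iff W is linearly dependent
  have step3 : ((∃ i, eval p (s i) = 0 ∧ eval p (t i) = 0) ∨
       (¬ AlgebraicIndependent ℂ g) ∨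
       (∀ c : Fin m → Fin (m + 2), Function.Injective c →
          Matrix.det (Matrix.of fun i k => eval p (pderiv (c k) (g i))) = 0)) ↔
      ¬ LinearIndependent ℂ W := by
    constructor
    · rintro (⟨i, hs0, ht0⟩ | hdep | hminors)
      · intro hind'
        apply hind'.ne_zero i
        funext j
        rw [hW]
        show eval p (pderiv j (g i)) = 0
        rw [hg i, hs0, ht0]
        simp
      · intro hind'
        obtain ⟨c, hcinj, hcne⟩ := aux_indep_imp_exists_minor W hind'
        apply hcne
        obtain ⟨a, ha, hrel⟩ := aux_exists_relation_of_dep g hdep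
        have hpolydet : Matrix.det (Matrix.of fun i k => pderiv (c k) (g i)) = 0 :=
          aux_det_zero_of_relation (fun i j => pderiv j (g i)) a ha hrel c
        have := congrArg (eval p) hpolydet
        rw [RingHom.map_det, map_zero] at this
        convert this using 2
        ext i k; rfl
      · intro hind'
        obtain ⟨c, hcinj, hcne⟩ := aux_indep_imp_exists_minor W hind'
        exact hcne (hminors c hcinj)
    · intro hdep
      refine Or.inr (Or.inr fun c _ => ?_)
      exact aux_dep_imp_minors_zero W hdep c
  rw [step1, step2, step3]

end
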